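/- arXiv:2509.09788 — 2 statements merged into one kernel-verified Lean document; each statement's English description precedes it below -/
import Mathlib

section
/- Let X be a countably infinite set and let H ≤ Sym(X) be a subgroup whose action on X is k-transitive for every k ∈ ℕ. If H ∩ Sym_f(X) = {1}, i.e. the only finitely supported permutation in H is the identity, then H is mixed identity free. -/
/-- A group `H` is mixed identity free if for every nontrivial element `w` of the free
product `H ∗ ℤ` there is a homomorphism `φ : H ∗ ℤ → H` restricting to the identity on `H`
with `φ w ≠ 1`. -/
def MixedIdentityFree (H : Type*) [Group H] : Prop :=
  ∀ w : Monoid.Coprod H (Multiplicative ℤ), w ≠ 1 →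
    ∃ φ : Monoid.Coprod H (Multiplicative ℤ) →* H,
      (∀ h : H, φ (Monoid.Coprod.inl h) = h) ∧ φ w ≠ 1

/-- The action of a group `H` on `Ω` via `ρ : H →* Equiv.Perm Ω` is `k`-transitive:
`Ω` has at least `k` points, and any `k`-tuple of pairwise distinct points can be carried
to any other. -/
def IsKTransitive {H : Type*} [Group H] {Ω : Type*} (ρ : H →* Equiv.Perm Ω) (k : ℕ) :
    Prop :=
  Nonempty (Fin k ↪ Ω) ∧ ∀ x y : Fin k ↪ Ω, ∃ h : H, ∀ i : Fin k, ρ h (x i) = y i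

open Equiv

set_option linter.unusedSectionVars false

namespace Statement9Aux

variable {X : Type} [Infinite X]

private lemma exists_fresh_fun (A : Finset X) :
    ∃ e : ℕ → X, Function.Injective e ∧ ∀ j, e j ∉ A := by
  have h : ((A : Set X)ᶜ).Infinite := A.finite_toSet.infinite_compl
  let f := Set.Infinite.natEmbedding _ h
  refine ⟨fun j => (f j : X), fun i j hij => f.injective (Subtype.ext hij), fun j => ?_⟩
  exact fun hj => (f j).2 (Finset.mem_coe.mpr hj)

private lemma chain_lemma (n : ℤ) (hn : n ≠ 0) (F : Finset X) (σ : List (X × X))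
    (p q : X) (extra : Finset X)
    (h1 : (σ.map Prod.fst).Nodup) (h2 : (σ.map Prod.snd).Nodup)
    (hsub : ∀ a ∈ σ, a.1 ∈ F ∧ a.2 ∈ F)
    (hpF : p ∈ F) (hp1 : p ∉ σ.map Prod.fst) (hp2 : p ∉ σ.map Prod.snd)
    (hqF : q ∉ F) :
    ∃ (σ' : List (X × X)) (F' : Finset X),
      (∀ a ∈ σ, a ∈ σ') ∧ (σ'.map Prod.fst).Nodup ∧ (σ'.map Prod.snd).Nodup ∧
      F ⊆ F' ∧ q ∈ F' ∧ (∀ a ∈ σ', a.1 ∈ F' ∧ a.2 ∈ F') ∧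
      (∀ x ∈ F', x ∈ F ∨ x = q ∨ x ∉ extra) ∧
      (∀ t : Perm X, (∀ a ∈ σ', t a.1 = a.2) → (t ^ n) p = q) := by
  classical
  obtain ⟨e, he, heA⟩ := exists_fresh_fun (F ∪ extra ∪ {q})
  set k := n.natAbs with hk
  have hk1 : 0 < k := Int.natAbs_pos.mpr hn
  set d : ℕ → X := fun j => if j = 0 then p else if j = k then q else e j with hd
  have hd0 : d 0 = p := by simp [hd]
  have hdk : d k = q := by simp [hd, Nat.pos_iff_ne_zero.mp hk1]
  have heF : ∀ j, e j ∉ F := fun j hj => heA j (by simp [hj])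
  have heq : ∀ j, e j ≠ q := fun j hj => heA j (by simp [hj])
  have heextra : ∀ j, e j ∉ extra := fun j hj => heA j (by simp [hj])
  have hpq : p ≠ q := fun h => hqF (h ▸ hpF)
  have hdmid : ∀ j, j ≠ 0 → j ≠ k → d j = e j := by
    intro j hj0 hjk; simp [hd, hj0, hjk]
  have hdinj : ∀ i, ∀ j, d i = d j → (i = j ∨ (i ≠ 0 ∧ i ≠ k ∧ j ≠ 0 ∧ j ≠ k)) := by
    intro i j hij
    by_cases hi0 : i = 0 <;> by_cases hj0 : j = 0 <;>
      by_cases hik : i = k <;> by_cases hjk : j = k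
    all_goals first
      | (left; omega)
      | (left;
         subst_vars;
         first
           | rfl
           | (exfalso;
              simp only [hd0, hdk] at hij
              first
                | exact hpq hij
                | exact hpq hij.symm
                | (rw [hdmid _ (by assumption) (by assumption)] at hij;
                   first
                     | exact (heq _) hij.symm
                     | exact (heq _) (hij.symm ▸ rfl)
                     | exact heF _ (hij ▸ hpF)
                     | exact (heq _) hij
                     | exact heF _ (hij.symm ▸ hpF))))
      | (right; exact ⟨hi0, hik, hj0, hjk⟩)
  have hdinj' : Function.Injective d := by
    intro i j hij
    rcases hdinj i j hij with h | ⟨hi0, hik, hj0, hjk⟩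
    · exact h
    · rw [hdmid i hi0 hik, hdmid j hj0 hjk] at hij
      exact he hij
  have hdF : ∀ j, j ≠ 0 → d j ∉ F := by
    intro j hj0
    by_cases hjk : j = k
    · rw [hjk, hdk]; exact hqF
    · rw [hdmid j hj0 hjk]; exact heF j
  have hdfst : ∀ j, d j ∉ σ.map Prod.fst := by
    intro j hj
    by_cases hj0 : j = 0
    · rw [hj0, hd0] at hj; exact hp1 hj
    · rcases List.mem_map.mp hj with ⟨a, ha, ha2⟩
      exact hdF j hj0 (ha2 ▸ (hsub a ha).1)
  have hdsnd : ∀ j, d j ∉ σ.map Prod.snd := by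
    intro j hj
    by_cases hj0 : j = 0
    · rw [hj0, hd0] at hj; exact hp2 hj
    · rcases List.mem_map.mp hj with ⟨a, ha, ha2⟩
      exact hdF j hj0 (ha2 ▸ (hsub a ha).2)
  have hextraP : ∀ x ∈ F ∪ (Finset.range (k+1)).image d, x ∈ F ∨ x = q ∨ x ∉ extra := by
    intro x hx
    rcases Finset.mem_union.mp hx with hx | hx
    · exact Or.inl hx
    · rcases Finset.mem_image.mp hx with ⟨j, hj, rfl⟩
      by_cases hj0 : j = 0
      · exact Or.inl (hj0 ▸ hd0 ▸ hpF)
      · by_cases hjk : j = k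
        · exact Or.inr (Or.inl (hjk ▸ hdk))
        · exact Or.inr (Or.inr (hdmid j hj0 hjk ▸ heextra j))
  have hsubF' : ∀ a ∈ σ, a.1 ∈ F ∪ (Finset.range (k+1)).image d ∧
      a.2 ∈ F ∪ (Finset.range (k+1)).image d := by
    intro a ha
    exact ⟨Finset.mem_union_left _ (hsub a ha).1, Finset.mem_union_left _ (hsub a ha).2⟩
  have hdmem : ∀ j, j ≤ k → d j ∈ F ∪ (Finset.range (k+1)).image d := by
    intro j hj
    exact Finset.mem_union_right _ (Finset.mem_image.mpr ⟨j, Finset.mem_range.mpr (by omega), rfl⟩)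
  rcases lt_or_gt_of_ne hn with hneg | hpos
  · -- negative case : σadd j = (d (j+1), d j)
    refine ⟨σ ++ (List.range k).map (fun j => (d (j+1), d j)),
      F ∪ (Finset.range (k+1)).image d,
      fun a ha => List.mem_append_left _ ha, ?_, ?_, Finset.subset_union_left,
      hdk ▸ hdmem k le_rfl, ?_, hextraP, ?_⟩
    · rw [List.map_append, List.nodup_append, List.map_map]
      refine ⟨h1, List.Nodup.map_on ?_ List.nodup_range, ?_⟩
      · intro i _ j _ hij
        exact Nat.succ_injective (hdinj' hij)
      · intro x hx _ hx2 rfl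
        rcases List.mem_map.mp hx2 with ⟨j, _, rfl⟩
        exact hdfst _ (by simpa using hx)
    · rw [List.map_append, List.nodup_append, List.map_map]
      refine ⟨h2, List.Nodup.map_on ?_ List.nodup_range, ?_⟩
      · intro i _ j _ hij
        exact hdinj' hij
      · intro x hx _ hx2 rfl
        rcases List.mem_map.mp hx2 with ⟨j, _, rfl⟩
        exact hdsnd _ (by simpa using hx)
    · intro a ha
      rcases List.mem_append.mp ha with ha | ha
      · exact hsubF' a ha
      · rcases List.mem_map.mp ha with ⟨j, hj, rfl⟩
        have hj' := List.mem_range.mp hj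
        exact ⟨hdmem (j+1) (by omega), hdmem j (by omega)⟩
    · intro t ht
      have hstep : ∀ j, j < k → t (d (j+1)) = d j := by
        intro j hj
        exact ht (d (j+1), d j) (List.mem_append_right _
          (List.mem_map.mpr ⟨j, List.mem_range.mpr hj, rfl⟩))
      have key : ∀ j, j ≤ k → (t ^ j) q = d (k - j) := by
        intro j
        induction j with
        | zero => intro _; simp [hdk]
        | succ j ihj =>
          intro hj
          rw [pow_succ', Perm.mul_apply, ihj (by omega)]
          have h1 : k - j = (k - (j+1)) + 1 := by omega
          rw [h1, hstep (k - (j+1)) (by omega)]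
      have hkq : (t ^ k) q = p := by rw [key k le_rfl, Nat.sub_self, hd0]
      have hnk : n = -(k : ℤ) := by omega
      rw [hnk, zpow_neg, zpow_natCast, ← hkq, ← Perm.mul_apply, inv_mul_cancel, Perm.one_apply]
  · -- positive case : σadd j = (d j, d (j+1))
    refine ⟨σ ++ (List.range k).map (fun j => (d j, d (j+1))),
      F ∪ (Finset.range (k+1)).image d,
      fun a ha => List.mem_append_left _ ha, ?_, ?_, Finset.subset_union_left,
      hdk ▸ hdmem k le_rfl, ?_, hextraP, ?_⟩
    · rw [List.map_append, List.nodup_append, List.map_map]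
      refine ⟨h1, List.Nodup.map_on ?_ List.nodup_range, ?_⟩
      · intro i _ j _ hij
        exact hdinj' hij
      · intro x hx _ hx2 rfl
        rcases List.mem_map.mp hx2 with ⟨j, _, rfl⟩
        exact hdfst _ (by simpa using hx)
    · rw [List.map_append, List.nodup_append, List.map_map]
      refine ⟨h2, List.Nodup.map_on ?_ List.nodup_range, ?_⟩
      · intro i _ j _ hij
        exact Nat.succ_injective (hdinj' hij)
      · intro x hx _ hx2 rfl
        rcases List.mem_map.mp hx2 with ⟨j, _, rfl⟩
        exact hdsnd _ (by simpa using hx)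
    · intro a ha
      rcases List.mem_append.mp ha with ha | ha
      · exact hsubF' a ha
      · rcases List.mem_map.mp ha with ⟨j, hj, rfl⟩
        have hj' := List.mem_range.mp hj
        exact ⟨hdmem j (by omega), hdmem (j+1) (by omega)⟩
    · intro t ht
      have hstep : ∀ j, j < k → t (d j) = d (j+1) := by
        intro j hj
        exact ht (d j, d (j+1)) (List.mem_append_right _
          (List.mem_map.mpr ⟨j, List.mem_range.mpr hj, rfl⟩))
      have key : ∀ j, j ≤ k → (t ^ j) p = d j := by
        intro j
        induction j with
        | zero => intro _; simp [hd0]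
        | succ j ihj =>
          intro hj
          rw [pow_succ', Perm.mul_apply, ihj (by omega), hstep j (by omega)]
      have hnk : n = (k : ℤ) := by omega
      rw [hnk, zpow_natCast, key k le_rfl, hdk]

private def runP (t : Perm X) (r : List (ℤ × Perm X)) (p : X) : X :=
  r.foldl (fun q a => a.2 ((t ^ a.1) q)) p

private lemma runP_cons (t : Perm X) (a : ℤ × Perm X) (r : List (ℤ × Perm X)) (p : X) :
    runP t (a :: r) p = runP t r (a.2 ((t ^ a.1) p)) := rfl

private lemma main_rec (r : List (ℤ × Perm X)) :
    r ≠ [] → (∀ a ∈ r, a.1 ≠ 0) → (∀ a ∈ r.dropLast, {x | a.2 x ≠ x}.Infinite) →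
    ∀ (F : Finset X) (σ : List (X × X)) (p : X),
      (σ.map Prod.fst).Nodup → (σ.map Prod.snd).Nodup →
      (∀ a ∈ σ, a.1 ∈ F ∧ a.2 ∈ F) →
      p ∈ F → p ∉ σ.map Prod.fst → p ∉ σ.map Prod.snd →
      ∃ σ' : List (X × X),
        (∀ a ∈ σ, a ∈ σ') ∧
        (σ'.map Prod.fst).Nodup ∧ (σ'.map Prod.snd).Nodup ∧
        ∀ t : Perm X, (∀ a ∈ σ', t a.1 = a.2) → runP t r p ∉ F := by
  classical
  induction r with
  | nil => intro h; exact absurd rfl h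
  | cons a r' ih =>
    intro _ hn hint F σ p h1 h2 hsub hpF hp1 hp2
    obtain ⟨n, h⟩ := a
    rcases eq_or_ne r' [] with rfl | hr'
    · -- final step
      have hfin : ((h ⁻¹' (F : Set X)) ∪ (F : Set X)).Finite :=
        ((F.finite_toSet.preimage (h.injective.injOn))).union F.finite_toSet
      obtain ⟨q, hq⟩ := hfin.infinite_compl.nonempty
      rw [Set.mem_compl_iff, Set.mem_union] at hq
      push_neg at hq
      obtain ⟨σ', F', hext, n1, n2, _, _, _, _, heval⟩ :=
        chain_lemma n (hn _ (List.mem_cons_self)) F σ p q ∅ h1 h2 hsub hpF hp1 hp2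
          (fun hc => hq.2 (Finset.mem_coe.mpr hc))
      refine ⟨σ', hext, n1, n2, fun t ht => ?_⟩
      rw [runP_cons]
      have : (t ^ n) p = q := heval t ht
      rw [this]
      exact fun hc => hq.1 (by simpa [runP] using hc)
    · -- interior step
      have hsupp : {x | h x ≠ x}.Infinite := by
        have hmem : (n, h) ∈ ((n, h) :: r').dropLast := by
          obtain ⟨b, r'', rfl⟩ : ∃ b r'', r' = b :: r'' := by
            cases r' with
            | nil => exact absurd rfl hr'
            | cons b r'' => exact ⟨b, r'', rfl⟩
          rw [List.dropLast_cons₂]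
          exact List.mem_cons_self
        exact hint _ hmem
      have hfin : ((F : Set X) ∪ h ⁻¹' (F : Set X)).Finite :=
        F.finite_toSet.union (F.finite_toSet.preimage (h.injective.injOn))
      obtain ⟨q, hq⟩ := (hsupp.diff hfin).nonempty
      obtain ⟨hqmove, hqF⟩ := hq
      rw [Set.mem_union] at hqF
      push_neg at hqF
      obtain ⟨σ₁, F₁, hext₁, n1, n2, hFF₁, hqF₁, hsub₁, hextra₁, heval₁⟩ :=
        chain_lemma n (hn _ (List.mem_cons_self)) F σ p q {h q} h1 h2 hsub hpF hp1 hp2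
          (fun hc => hqF.1 (Finset.mem_coe.mpr hc))
      have hhq : h q ∉ F₁ := by
        intro hc
        rcases hextra₁ _ hc with hc' | hc' | hc'
        · exact hqF.2 (Finset.mem_coe.mpr hc')
        · exact hqmove hc'
        · exact hc' (Finset.mem_singleton_self _)
      have hint' : ∀ b ∈ r'.dropLast, {x | b.2 x ≠ x}.Infinite := by
        intro b hb
        refine hint b ?_
        obtain ⟨c, r'', rfl⟩ : ∃ c r'', r' = c :: r'' := by
          cases r' with
          | nil => exact absurd rfl hr'
          | cons c r'' => exact ⟨c, r'', rfl⟩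
        rw [List.dropLast_cons₂]
        exact List.mem_cons_of_mem _ hb
      obtain ⟨σ₂, hext₂, m1, m2, hrun⟩ :=
        ih hr' (fun b hb => hn b (List.mem_cons_of_mem _ hb)) hint'
          (insert (h q) F₁) σ₁ (h q) n1 n2
          (fun b hb => ⟨Finset.mem_insert_of_mem (hsub₁ b hb).1,
            Finset.mem_insert_of_mem (hsub₁ b hb).2⟩)
          (Finset.mem_insert_self _ _)
          (fun hc => by
            rcases List.mem_map.mp hc with ⟨b, hb, hb2⟩
            exact hhq (hb2 ▸ (hsub₁ b hb).1))
          (fun hc => by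
            rcases List.mem_map.mp hc with ⟨b, hb, hb2⟩
            exact hhq (hb2 ▸ (hsub₁ b hb).2))
      refine ⟨σ₂, fun b hb => hext₂ b (hext₁ b hb), m1, m2, fun t ht => ?_⟩
      rw [runP_cons]
      have ht₁ : ∀ b ∈ σ₁, t b.1 = b.2 := fun b hb => ht b (hext₂ b hb)
      have : (t ^ n) p = q := heval₁ t ht₁
      rw [this]
      intro hc
      exact hrun t ht (Finset.mem_insert_of_mem (hFF₁ hc))

private def shiftW (g : Perm X) : List (ℤ × Perm X) → List (ℤ × Perm X)
  | [] => []
  | (n, _h) :: l => shiftW _h l ++ [(n, g)]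

private lemma shiftW_mem : ∀ (l : List (ℤ × Perm X)) (g : Perm X), ∀ a ∈ shiftW g l,
    (∃ b ∈ l, a.1 = b.1) ∧ (a.2 = g ∨ ∃ b ∈ l.dropLast, a.2 = b.2) := by
  intro l
  induction l with
  | nil => intro g a ha; simp [shiftW] at ha
  | cons c l' ihl =>
    intro g a ha
    obtain ⟨n, h⟩ := c
    rw [shiftW, List.mem_append] at ha
    rcases ha with ha | ha
    · obtain ⟨⟨b, hb, hb1⟩, hb2⟩ := ihl h a ha
      have hl' : l' ≠ [] := by rintro rfl; simp at hb
      obtain ⟨c', l'', rfl⟩ : ∃ c' l'', l' = c' :: l'' := by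
        cases l' with
        | nil => exact absurd rfl hl'
        | cons c' l'' => exact ⟨c', l'', rfl⟩
      refine ⟨⟨b, List.mem_cons_of_mem _ hb, hb1⟩, ?_⟩
      rcases hb2 with hb2 | ⟨b', hb', hb2⟩
      · exact Or.inr ⟨(n, h), by rw [List.dropLast_cons₂]; exact List.mem_cons_self, hb2⟩
      · exact Or.inr ⟨b', by rw [List.dropLast_cons₂]; exact List.mem_cons_of_mem _ hb', hb2⟩
    · rw [List.mem_singleton] at ha
      subst ha
      exact ⟨⟨(n, h), List.mem_cons_self, rfl⟩, Or.inl rfl⟩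

private lemma getLastD_indep {α : Type*} : ∀ (l : List α) (_ : l ≠ []) (d d' : α),
    l.getLastD d = l.getLastD d'
  | [], hl, _, _ => absurd rfl hl
  | _a :: _l, _, d, d' => by
    have h := List.getLast?_eq_getLast (l := _a :: _l) (by simp)
    simp [List.getLastD_eq_getLast?, h]

private lemma eval_shift (t : Perm X) : ∀ (l : List (ℤ × Perm X)), l ≠ [] →
    ∀ (g : Perm X) (x : X),
    (g * (l.map (fun a => t ^ a.1 * a.2)).prod) x
      = runP t (shiftW g l) ((l.getLastD (0, 1)).2 x) := by
  intro l
  induction l with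
  | nil => intro hl; exact absurd rfl hl
  | cons c l' ihl =>
    intro _ g x
    obtain ⟨n, h⟩ := c
    rcases eq_or_ne l' [] with rfl | hl'
    · simp [shiftW, runP, List.getLastD_cons, Perm.mul_apply]
    · have key : (h * (l'.map (fun a => t ^ a.1 * a.2)).prod) x
          = runP t (shiftW h l') ((l'.getLastD (0, 1)).2 x) := ihl hl' h x
      rw [List.map_cons, List.prod_cons, shiftW]
      have hrun : runP t (shiftW h l' ++ [(n, g)]) ((((n,h) :: l').getLastD (0, 1)).2 x)
          = g ((t ^ n) (runP t (shiftW h l') ((((n,h) :: l').getLastD (0, 1)).2 x))) := by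
        rw [runP, List.foldl_append]
        rfl
      rw [hrun]
      have hgl : (((n,h) :: l').getLastD (0, 1)).2 x = (l'.getLastD (0, 1)).2 x := by
        rw [List.getLastD_cons, getLastD_indep l' hl' (n, h) (0, 1)]
      rw [hgl, ← key]
      simp [Perm.mul_apply, mul_assoc]

private lemma core (l : List (ℤ × Perm X)) (hl : l ≠ []) (g : Perm X)
    (hn : ∀ a ∈ l, a.1 ≠ 0)
    (hint : ∀ a ∈ l.dropLast, {x | a.2 x ≠ x}.Infinite) :
    ∃ σ : List (X × X), (σ.map Prod.fst).Nodup ∧ (σ.map Prod.snd).Nodup ∧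
      ∀ t : Perm X, (∀ a ∈ σ, t a.1 = a.2) →
        g * (l.map (fun a => t ^ a.1 * a.2)).prod ≠ 1 := by
  classical
  obtain ⟨x0⟩ : Nonempty X := inferInstance
  set p0 := (l.getLastD (0, 1)).2 x0 with hp0
  obtain ⟨c, l', rfl⟩ : ∃ c l', l = c :: l' := by
    cases l with
    | nil => exact absurd rfl hl
    | cons c l' => exact ⟨c, l', rfl⟩
  obtain ⟨n₁, h₁⟩ := c
  have hshift_ne : shiftW g ((n₁, h₁) :: l') ≠ [] := by
    rw [shiftW]
    exact fun hc => by simpa using congrArg List.length hc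
  have hnr : ∀ a ∈ shiftW g ((n₁, h₁) :: l'), a.1 ≠ 0 := by
    intro a ha
    obtain ⟨⟨b, hb, hb1⟩, _⟩ := shiftW_mem _ g a ha
    rw [hb1]; exact hn b hb
  have hintr : ∀ a ∈ (shiftW g ((n₁, h₁) :: l')).dropLast, {x | a.2 x ≠ x}.Infinite := by
    intro a ha
    rw [shiftW, List.dropLast_concat] at ha
    have hl'' : l' ≠ [] := by rintro rfl; simp [shiftW] at ha
    obtain ⟨_, hb2⟩ := shiftW_mem l' h₁ a ha
    rcases hb2 with hb2 | ⟨b', hb', hb2⟩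
    · refine hb2 ▸ hint (n₁, h₁) ?_
      obtain ⟨c', l'', rfl⟩ : ∃ c' l'', l' = c' :: l'' := by
        cases l' with
        | nil => exact absurd rfl hl''
        | cons c' l'' => exact ⟨c', l'', rfl⟩
      rw [List.dropLast_cons₂]
      exact List.mem_cons_self
    · refine hb2 ▸ hint b' ?_
      obtain ⟨c', l'', rfl⟩ : ∃ c' l'', l' = c' :: l'' := by
        cases l' with
        | nil => exact absurd rfl hl''
        | cons c' l'' => exact ⟨c', l'', rfl⟩
      rw [List.dropLast_cons₂]
      exact List.mem_cons_of_mem _ hb'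
  obtain ⟨σ, _, m1, m2, hrun⟩ :=
    main_rec (shiftW g ((n₁, h₁) :: l')) hshift_ne hnr hintr
      {x0, p0} [] p0 (by simp) (by simp) (by simp)
      (by simp) (by simp) (by simp)
  refine ⟨σ, m1, m2, fun t ht hc => ?_⟩
  have := eval_shift t ((n₁, h₁) :: l') hl g x0
  rw [hc] at this
  simp only [Perm.one_apply] at this
  exact (hrun t ht) (this ▸ Finset.mem_insert_self _ _)

private lemma dropLast_map' {α β : Type*} (f : α → β) : ∀ (l : List α),
    (l.map f).dropLast = l.dropLast.map f
  | [] => rfl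
  | [_a] => rfl
  | _a :: _b :: _l => by
    rw [List.map_cons, List.map_cons, List.dropLast_cons₂, List.dropLast_cons₂,
      List.map_cons, ← List.map_cons (f := f) (a := _b), dropLast_map' f (_b :: _l)]

private lemma mem_dropLast_cons' {α : Type*} {b : α} {l : List α} {x : α}
    (hx : x ∈ l.dropLast) : x ∈ (b :: l).dropLast := by
  obtain ⟨c, l', rfl⟩ : ∃ c l', l = c :: l' := by
    cases l with
    | nil => simp at hx
    | cons c l' => exact ⟨c, l', rfl⟩
  rw [List.dropLast_cons₂]
  exact List.mem_cons_of_mem _ hx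

private lemma exists_reduced {G : Type*} [Group G] (w : Monoid.Coprod G (Multiplicative ℤ)) :
    ∃ (g : G) (l : List (ℤ × G)),
      w = Monoid.Coprod.inl g *
        (l.map (fun a => Monoid.Coprod.inr (M := G) (Multiplicative.ofAdd a.1) *
          Monoid.Coprod.inl a.2)).prod ∧
      (∀ a ∈ l, a.1 ≠ 0) ∧ (∀ a ∈ l.dropLast, a.2 ≠ 1) := by
  induction w using Monoid.Coprod.induction_on' with
  | one => exact ⟨1, [], by simp, by simp, by simp⟩
  | inl_mul m w ihw =>
    obtain ⟨g, l, rfl, hn, hr⟩ := ihw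
    exact ⟨m * g, l, by rw [map_mul, mul_assoc], hn, hr⟩
  | inr_mul z w ihw =>
    obtain ⟨g, l, rfl, hn, hr⟩ := ihw
    rcases eq_or_ne z 1 with rfl | hz
    · exact ⟨g, l, by simp, hn, hr⟩
    · have hza : Multiplicative.toAdd z ≠ 0 := by
        intro hc
        exact hz (by rw [← ofAdd_toAdd z, hc]; rfl)
      rcases eq_or_ne g 1 with rfl | hg
      · match l, hn, hr with
        | [], _, _ =>
          refine ⟨1, [(Multiplicative.toAdd z, 1)], ?_, by simpa using hza, by simp⟩
          simp
        | (n₁, h₁) :: l', hn, hr =>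
          rcases eq_or_ne (Multiplicative.toAdd z + n₁) 0 with hz0 | hz0
          · refine ⟨h₁, l', ?_, fun a ha => hn a (List.mem_cons_of_mem _ ha),
              fun a ha => hr a (mem_dropLast_cons' ha)⟩
            have hzn : Monoid.Coprod.inr (M := G) z *
                Monoid.Coprod.inr (M := G) (Multiplicative.ofAdd n₁) = 1 := by
              rw [← map_mul]
              have : z * Multiplicative.ofAdd n₁ = 1 := by
                rw [← ofAdd_toAdd z, ← ofAdd_add, hz0]; rfl
              rw [this, map_one]
            simp only [List.map_cons, List.prod_cons, map_one, one_mul, ← mul_assoc]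
            rw [hzn]
            simp [mul_assoc]
          · refine ⟨1, (Multiplicative.toAdd z + n₁, h₁) :: l', ?_, ?_, ?_⟩
            · have hzn : Monoid.Coprod.inr (M := G)
                  (Multiplicative.ofAdd (Multiplicative.toAdd z + n₁)) =
                  Monoid.Coprod.inr (M := G) z *
                  Monoid.Coprod.inr (M := G) (Multiplicative.ofAdd n₁) := by
                rw [← map_mul, ofAdd_add, ofAdd_toAdd]
              simp only [List.map_cons, List.prod_cons, map_one, one_mul, hzn, mul_assoc]
            · intro a ha
              rcases List.mem_cons.mp ha with rfl | ha
              · exact hz0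
              · exact hn a (List.mem_cons_of_mem _ ha)
            · intro a ha
              rcases eq_or_ne l' [] with rfl | hl'
              · simp at ha
              · obtain ⟨c, l'', rfl⟩ : ∃ c l'', l' = c :: l'' := by
                  cases l' with
                  | nil => exact absurd rfl hl'
                  | cons c l'' => exact ⟨c, l'', rfl⟩
                rw [List.dropLast_cons₂] at ha
                rcases List.mem_cons.mp ha with rfl | ha
                · exact hr (n₁, h₁) (by rw [List.dropLast_cons₂]; exact List.mem_cons_self)
                · exact hr _ (mem_dropLast_cons' ha)
      · refine ⟨1, (Multiplicative.toAdd z, g) :: l, ?_, ?_, ?_⟩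
        · simp only [List.map_cons, List.prod_cons, map_one, one_mul,
            ofAdd_toAdd, mul_assoc]
        · intro a ha
          rcases List.mem_cons.mp ha with rfl | ha
          · exact hza
          · exact hn a ha
        · intro a ha
          rcases eq_or_ne l [] with rfl | hl
          · simp at ha
          · obtain ⟨c, l'', rfl⟩ : ∃ c l'', l = c :: l'' := by
              cases l with
              | nil => exact absurd rfl hl
              | cons c l'' => exact ⟨c, l'', rfl⟩
            rw [List.dropLast_cons₂] at ha
            rcases List.mem_cons.mp ha with rfl | ha
            · exact hg
            · exact hr _ ha

end Statement9Aux

/-- Let `X` be countably infinite and `H ≤ Sym(X)` a subgroup whose action on `X` is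
`k`-transitive for every `k`. If the only finitely supported permutation in `H` is the
identity, then `H` is mixed identity free. -/
theorem statement9 {X : Type} [Countable X] [Infinite X]
    (H : Subgroup (Equiv.Perm X))
    (htrans : ∀ k : ℕ, IsKTransitive H.subtype k)
    (hfs : ∀ π : Equiv.Perm X, π ∈ H → {x | π x ≠ x}.Finite → π = 1) :
    MixedIdentityFree H := by
  classical
  -- realization of a partial injection by an element of `H`
  have realize : ∀ σ : List (X × X), (σ.map Prod.fst).Nodup → (σ.map Prod.snd).Nodup →
      ∃ t : H, ∀ a ∈ σ, (t : Equiv.Perm X) a.1 = a.2 := by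
    intro σ n1 n2
    have inj1 : Function.Injective (fun i : Fin σ.length => (σ.get i).1) := by
      intro i j hij
      have hlen : (σ.map Prod.fst).length = σ.length := List.length_map _
      have h1 : (σ.map Prod.fst)[(i : ℕ)]'(by omega) = (σ.map Prod.fst)[(j : ℕ)]'(by omega) := by
        rw [List.getElem_map, List.getElem_map]
        exact hij
      exact Fin.ext ((List.Nodup.getElem_inj_iff n1).mp h1)
    have inj2 : Function.Injective (fun i : Fin σ.length => (σ.get i).2) := by
      intro i j hij
      have hlen : (σ.map Prod.snd).length = σ.length := List.length_map _
      have h1 : (σ.map Prod.snd)[(i : ℕ)]'(by omega) = (σ.map Prod.snd)[(j : ℕ)]'(by omega) := by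
        rw [List.getElem_map, List.getElem_map]
        exact hij
      exact Fin.ext ((List.Nodup.getElem_inj_iff n2).mp h1)
    obtain ⟨t, ht⟩ := (htrans σ.length).2 ⟨_, inj1⟩ ⟨_, inj2⟩
    refine ⟨t, fun a ha => ?_⟩
    obtain ⟨i, rfl⟩ := List.mem_iff_get.mp ha
    exact ht i
  intro w hw
  obtain ⟨g, l, rfl, hn, hred⟩ := Statement9Aux.exists_reduced w
  rcases eq_or_ne l [] with rfl | hl
  · -- the word is a nontrivial element of H
    have hg : g ≠ 1 := by
      rintro rfl
      exact hw (by simp)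
    refine ⟨Monoid.Coprod.lift (MonoidHom.id H) 1,
      fun h => Monoid.Coprod.lift_apply_inl _ _ _, ?_⟩
    simpa using hg
  · -- the word genuinely involves `t`
    set l' : List (ℤ × Equiv.Perm X) := l.map (fun a => (a.1, (a.2 : Equiv.Perm X))) with hl'
    have hl'ne : l' ≠ [] := by
      simpa [hl'] using hl
    have hn' : ∀ a ∈ l', a.1 ≠ 0 := by
      intro a ha
      rcases List.mem_map.mp ha with ⟨b, hb, rfl⟩
      exact hn b hb
    have hint' : ∀ a ∈ l'.dropLast, {x | a.2 x ≠ x}.Infinite := by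
      intro a ha
      have hdl : l'.dropLast = (l.dropLast).map (fun a => (a.1, (a.2 : Equiv.Perm X))) := by
        rw [hl', Statement9Aux.dropLast_map']
      rw [hdl] at ha
      rcases List.mem_map.mp ha with ⟨b, hb, rfl⟩
      have hb1 : b.2 ≠ 1 := hred b hb
      have hbne : ((b.2 : Equiv.Perm X)) ≠ 1 := by
        intro hc
        exact hb1 (Subtype.ext (by simpa using hc))
      intro hfin
      exact hbne (hfs _ (SetLike.coe_mem b.2) hfin)
    obtain ⟨σ, m1, m2, hcore⟩ := Statement9Aux.core l' hl'ne (g : Equiv.Perm X) hn' hint'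
    obtain ⟨t, ht⟩ := realize σ m1 m2
    refine ⟨Monoid.Coprod.lift (MonoidHom.id H) (zpowersHom H t),
      fun h => Monoid.Coprod.lift_apply_inl _ _ _, ?_⟩
    set φ := Monoid.Coprod.lift (MonoidHom.id H) (zpowersHom H t) with hφ
    have hφw : φ (Monoid.Coprod.inl g *
        (l.map (fun a => Monoid.Coprod.inr (M := H) (Multiplicative.ofAdd a.1) *
          Monoid.Coprod.inl a.2)).prod)
        = g * (l.map (fun a => t ^ a.1 * a.2)).prod := by
      have h1 : φ (Monoid.Coprod.inl g) = g := Monoid.Coprod.lift_apply_inl _ _ _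
      have h3 : (φ ∘ fun a : ℤ × ↥H => Monoid.Coprod.inr (M := ↥H)
          (Multiplicative.ofAdd a.1) * Monoid.Coprod.inl a.2)
          = fun a : ℤ × ↥H => t ^ a.1 * a.2 := by
        funext a
        simp only [hφ, Function.comp_apply, map_mul, Monoid.Coprod.lift_apply_inl,
          Monoid.Coprod.lift_apply_inr, zpowersHom_apply, toAdd_ofAdd, MonoidHom.id_apply]
      rw [map_mul, map_list_prod, List.map_map, h1, h3]
    rw [hφw]
    intro hc
    have hcoe : ((g : Equiv.Perm X) * (l'.map (fun a => (t : Equiv.Perm X) ^ a.1 * a.2)).prod)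
        = 1 := by
      have hthis := congrArg (H.subtype) hc
      rw [map_mul, map_list_prod, List.map_map, map_one] at hthis
      have hfun : (H.subtype ∘ fun a : ℤ × ↥H => t ^ a.1 * a.2)
          = ((fun a : ℤ × Equiv.Perm X => (t : Equiv.Perm X) ^ a.1 * a.2) ∘
            fun a : ℤ × ↥H => (a.1, (a.2 : Equiv.Perm X))) := by
        funext a
        simp only [Function.comp_apply, map_mul, map_zpow]
        rfl
      rw [hl', List.map_map, ← hfun]
      exact hthis
    exact hcore (t : Equiv.Perm X) ht hcoe
end

section
/- Let G₀ be a group, let s ∈ G₀ be a nontrivial element, let G = G₀ × ℤ with central element z = (1,1), and view Sym(G) as acting on the set G. Let A ⊆ ℕ be a set with 0 ∈ A and let σ ∈ Sym(G) be the product of the pairwise disjoint transpositions (z^a, z^a s) for a ∈ A. Let H ≤ Sym(G) be any subgroup containing σ and the left translation by z. Then for every n ∈ ℕ there exist an element τ ∈ H and a set B ⊆ {m ∈ ℕ : m ≥ n} such that τ is the product of the transposition (1, s) with the pairwise disjoint transpositions (z^b, z^b s) for b ∈ B. -/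
/-- `σ ∈ Sym(G₀ × ℤ)` is the product of the pairwise disjoint transpositions
`(z^a, z^a s)` for `a ∈ B`, where `z = (1,1)`, so `z^a = (1, a)` and `z^a s = (s, a)`:
it exchanges `(1, a)` and `(s, a)` for each `a ∈ B` and fixes every other point. -/
def IsDisjointTranspProd (G₀ : Type) [Group G₀] (s : G₀) (B : Set ℕ)
    (σ : Equiv.Perm (G₀ × Multiplicative ℤ)) : Prop :=
  (∀ a ∈ B,
    σ (1, Multiplicative.ofAdd (a : ℤ)) = (s, Multiplicative.ofAdd (a : ℤ)) ∧
    σ (s, Multiplicative.ofAdd (a : ℤ)) = (1, Multiplicative.ofAdd (a : ℤ))) ∧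
  ∀ x : G₀ × Multiplicative ℤ,
    (∀ a ∈ B, x ≠ (1, Multiplicative.ofAdd (a : ℤ)) ∧
      x ≠ (s, Multiplicative.ofAdd (a : ℤ))) → σ x = x

namespace DTPaux

variable {G₀ : Type} [Group G₀] {s : G₀}

/-- shorthand -/
def pt (g : G₀) (a : ℕ) : G₀ × Multiplicative ℤ := (g, Multiplicative.ofAdd (a : ℤ))

lemma pt_one_ne_pt (hs : s ≠ 1) (a b : ℕ) : pt (1:G₀) a ≠ pt s b := by
  simp [pt, Prod.ext_iff]; intro h; exact absurd h.symm hs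

lemma pt_inj_iff (g : G₀) {a b : ℕ} : pt g a = pt g b ↔ a = b := by
  simp [pt, Prod.ext_iff]

lemma fix_of_not_mem {C : Set ℕ} {σ : Equiv.Perm (G₀ × Multiplicative ℤ)}
    (hσ : IsDisjointTranspProd G₀ s C σ) (hs : s ≠ 1) {g : G₀} {a : ℕ}
    (hg : g = 1 ∨ g = s) (ha : a ∉ C) : σ (pt g a) = pt g a := by
  apply hσ.2
  intro c hc
  rcases hg with rfl | rfl
  · refine ⟨?_, pt_one_ne_pt hs a c⟩
    show pt (1:G₀) a ≠ pt 1 c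
    rw [Ne, pt_inj_iff]; rintro rfl; exact ha hc
  · refine ⟨fun h => pt_one_ne_pt hs c a h.symm, ?_⟩
    show pt g a ≠ pt g c
    rw [Ne, pt_inj_iff]; rintro rfl; exact ha hc

/-- product of disjoint transposition products is the symmetric-difference product -/
lemma mul_symmDiff (hs : s ≠ 1) {C D : Set ℕ}
    {σ ρ : Equiv.Perm (G₀ × Multiplicative ℤ)}
    (hσ : IsDisjointTranspProd G₀ s C σ) (hρ : IsDisjointTranspProd G₀ s D ρ) :
    IsDisjointTranspProd G₀ s ((C \ D) ∪ (D \ C)) (σ * ρ) := by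
  constructor
  · rintro a (⟨haC, haD⟩ | ⟨haD, haC⟩)
    · have h1 : ρ (pt (1:G₀) a) = pt 1 a := fix_of_not_mem hρ hs (Or.inl rfl) haD
      have h2 : ρ (pt s a) = pt s a := fix_of_not_mem hρ hs (Or.inr rfl) haD
      constructor
      · show σ (ρ _) = _
        rw [show ((1:G₀), Multiplicative.ofAdd (a:ℤ)) = pt 1 a from rfl, h1]
        exact (hσ.1 a haC).1
      · show σ (ρ _) = _
        rw [show ((s:G₀), Multiplicative.ofAdd (a:ℤ)) = pt s a from rfl, h2]
        exact (hσ.1 a haC).2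
    · constructor
      · show σ (ρ _) = _
        rw [(hρ.1 a haD).1]
        exact fix_of_not_mem hσ hs (Or.inr rfl) haC
      · show σ (ρ _) = _
        rw [(hρ.1 a haD).2]
        exact fix_of_not_mem hσ hs (Or.inl rfl) haC
  · intro x hx
    by_cases h1 : ∃ a ∈ C ∩ D, x = pt 1 a ∨ x = pt s a
    · obtain ⟨a, ⟨haC, haD⟩, rfl | rfl⟩ := h1
      · show σ (ρ _) = _
        rw [show ρ (pt (1:G₀) a) = pt s a from (hρ.1 a haD).1]
        exact (hσ.1 a haC).2
      · show σ (ρ _) = _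
        rw [show ρ (pt s a) = pt (1:G₀) a from (hρ.1 a haD).2]
        exact (hσ.1 a haC).1
    · push_neg at h1
      have hρx : ρ x = x := by
        apply hρ.2
        intro d hd
        constructor
        · intro h
          by_cases hdC : d ∈ C
          · exact (h1 d ⟨hdC, hd⟩).1 h
          · exact (hx d (Or.inr ⟨hd, hdC⟩)).1 h
        · intro h
          by_cases hdC : d ∈ C
          · exact (h1 d ⟨hdC, hd⟩).2 h
          · exact (hx d (Or.inr ⟨hd, hdC⟩)).2 h
      show σ (ρ x) = x
      rw [hρx]
      apply hσ.2
      intro c hc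
      constructor
      · intro h
        by_cases hcD : c ∈ D
        · exact (h1 c ⟨hc, hcD⟩).1 h
        · exact (hx c (Or.inl ⟨hc, hcD⟩)).1 h
      · intro h
        by_cases hcD : c ∈ D
        · exact (h1 c ⟨hc, hcD⟩).2 h
        · exact (hx c (Or.inl ⟨hc, hcD⟩)).2 h


lemma mulLeft_pow_apply (z : G₀ × Multiplicative ℤ) (n : ℕ) (x : G₀ × Multiplicative ℤ) :
    ((Equiv.mulLeft z)^n) x = z^n * x := by
  induction n with
  | zero => simp
  | succ k ih => rw [pow_succ, pow_succ]; simp [Equiv.Perm.mul_apply, ih, mul_assoc]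

lemma z_pow (n : ℕ) :
    (((1 : G₀), Multiplicative.ofAdd (1 : ℤ)))^n = (1, Multiplicative.ofAdd (n : ℤ)) := by
  ext
  · simp
  · simp [Prod.pow_snd, ← ofAdd_nsmul]

lemma conj_shift (hs : s ≠ 1) {C : Set ℕ} {σ : Equiv.Perm (G₀ × Multiplicative ℤ)}
    (hσ : IsDisjointTranspProd G₀ s C σ) (n : ℕ) :
    IsDisjointTranspProd G₀ s ((· + n) '' C)
      ((Equiv.mulLeft ((1, Multiplicative.ofAdd (1 : ℤ)) : G₀ × Multiplicative ℤ))^n * σ *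
        ((Equiv.mulLeft ((1, Multiplicative.ofAdd (1 : ℤ)) : G₀ × Multiplicative ℤ))^n)⁻¹) := by
  set z : G₀ × Multiplicative ℤ := (1, Multiplicative.ofAdd (1 : ℤ)) with hz
  set μ : Equiv.Perm (G₀ × Multiplicative ℤ) := (Equiv.mulLeft z)^n with hμ
  have hμ_apply : ∀ x, μ x = z^n * x := mulLeft_pow_apply z n
  have hμinv : ∀ x, μ⁻¹ x = (z^n)⁻¹ * x := by
    intro x
    have : μ ((z^n)⁻¹ * x) = x := by rw [hμ_apply]; group
    calc μ⁻¹ x = μ⁻¹ (μ ((z^n)⁻¹ * x)) := by rw [this]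
      _ = (z^n)⁻¹ * x := by simp
  have hzn : z^n = (1, Multiplicative.ofAdd (n : ℤ)) := z_pow n
  have key : ∀ (g : G₀) (a : ℕ), z^n * pt g a = pt g (a + n) := by
    intro g a
    rw [hzn]
    show ((1 : G₀) * g, Multiplicative.ofAdd (n:ℤ) * Multiplicative.ofAdd (a:ℤ)) = _
    rw [← ofAdd_add]
    simp only [pt, one_mul, Prod.mk.injEq]
    constructor
    · trivial
    · rw [add_comm]
      push_cast
      ring_nf
  have keyinv : ∀ (g : G₀) (a : ℕ), (z^n)⁻¹ * pt g (a + n) = pt g a := by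
    intro g a
    rw [← key g a]
    group
  constructor
  · rintro b ⟨a, haC, rfl⟩
    have e1 : σ (pt (1:G₀) a) = pt s a := (hσ.1 a haC).1
    have e2 : σ (pt s a) = pt (1:G₀) a := (hσ.1 a haC).2
    constructor
    · show μ (σ (μ⁻¹ (pt (1:G₀) (a+n)))) = pt s (a+n)
      rw [hμinv, keyinv, e1, hμ_apply, key]
    · show μ (σ (μ⁻¹ (pt s (a+n)))) = pt (1:G₀) (a+n)
      rw [hμinv, keyinv, e2, hμ_apply, key]
  · intro x hx
    show μ (σ (μ⁻¹ x)) = x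
    have : σ (μ⁻¹ x) = μ⁻¹ x := by
      apply hσ.2
      intro c hc
      constructor
      · intro h
        have h' : μ⁻¹ x = pt (1:G₀) c := h
        have : x = pt 1 (c + n) := by
          rw [← key 1 c, ← h', hμinv]; group
        exact (hx (c+n) ⟨c, hc, rfl⟩).1 this
      · intro h
        have h' : μ⁻¹ x = pt s c := h
        have : x = pt s (c + n) := by
          rw [← key s c, ← h', hμinv]; group
        exact (hx (c+n) ⟨c, hc, rfl⟩).2 this
    rw [this]
    rw [hμ_apply, hμinv]
    group

end DTPaux


open DTPaux in
/-- Lemma 2.6 of the paper. Let `s ≠ 1` in `G₀`, `G = G₀ × ℤ` with `z = (1,1)`, let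
`A ⊆ ℕ` contain `0`, and let `σ` be the product of the disjoint transpositions
`(z^a, z^a s)` for `a ∈ A`. If `H ≤ Sym(G)` contains `σ` and the left translation by `z`,
then for every `n` there are `τ ∈ H` and `B ⊆ {m : m ≥ n}` such that `τ` is the product
of the transposition `(1, s)` with the pairwise disjoint transpositions `(z^b, z^b s)`
for `b ∈ B`. -/
theorem statement13 (G₀ : Type) [Group G₀] (s : G₀) (hs : s ≠ 1)
    (A : Set ℕ) (h0 : 0 ∈ A)
    (σ : Equiv.Perm (G₀ × Multiplicative ℤ))
    (hσ : IsDisjointTranspProd G₀ s A σ)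
    (H : Subgroup (Equiv.Perm (G₀ × Multiplicative ℤ)))
    (hσH : σ ∈ H)
    (hzH : (Equiv.mulLeft ((1, Multiplicative.ofAdd (1 : ℤ)) : G₀ × Multiplicative ℤ)) ∈ H)
    (n : ℕ) :
    ∃ τ ∈ H, ∃ B : Set ℕ, (∀ b ∈ B, n ≤ b) ∧ 0 ∉ B ∧
      IsDisjointTranspProd G₀ s (insert 0 B) τ := by
  induction n with
  | zero =>
    refine ⟨σ, hσH, A \ {0}, fun b _ => Nat.zero_le b, fun h => h.2 rfl, ?_⟩
    have hA : insert 0 (A \ {0}) = A := by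
      ext m
      simp only [Set.mem_insert_iff, Set.mem_diff, Set.mem_singleton_iff]
      constructor
      · rintro (rfl | ⟨h, _⟩) <;> [exact h0; exact h]
      · intro hm
        by_cases hm0 : m = 0
        · exact Or.inl hm0
        · exact Or.inr ⟨hm, hm0⟩
    rwa [hA]
  | succ n ih =>
    obtain ⟨τ, hτH, B, hBn, hB0, hτ⟩ := ih
    by_cases hn : n ∈ B
    · -- n ≥ 1
      have hn1 : 1 ≤ n := by
        rcases Nat.eq_zero_or_pos n with rfl | h
        · exact absurd hn hB0
        · exact h
      set z : G₀ × Multiplicative ℤ := (1, Multiplicative.ofAdd (1 : ℤ)) with hz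
      set μ : Equiv.Perm (G₀ × Multiplicative ℤ) := (Equiv.mulLeft z)^n with hμ
      have hμH : μ ∈ H := pow_mem hzH n
      set C : Set ℕ := insert 0 B with hC
      set D : Set ℕ := (· + n) '' C with hD
      have hconj : IsDisjointTranspProd G₀ s D (μ * τ * μ⁻¹) := conj_shift hs hτ n
      have hmul : IsDisjointTranspProd G₀ s ((C \ D) ∪ (D \ C)) (τ * (μ * τ * μ⁻¹)) :=
        mul_symmDiff hs hτ hconj
      have h0D : (0 : ℕ) ∉ D := by
        rintro ⟨c, _, hc⟩
        have : c + n = 0 := hc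
        omega
      have h0mem : (0 : ℕ) ∈ (C \ D) ∪ (D \ C) := Or.inl ⟨Set.mem_insert 0 B, h0D⟩
      refine ⟨τ * (μ * τ * μ⁻¹), mul_mem hτH (mul_mem (mul_mem hμH hτH) (inv_mem hμH)),
        ((C \ D) ∪ (D \ C)) \ {0}, ?_, fun h => h.2 rfl, ?_⟩
      · rintro b ⟨hb, hb0⟩
        simp only [Set.mem_singleton_iff] at hb0
        rcases hb with ⟨hbC, hbD⟩ | ⟨⟨c, hcC, rfl⟩, hbC⟩
        · -- b ∈ C, b ∉ D, b ≠ 0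
          have hbB : b ∈ B := by
            rcases hbC with rfl | h
            · exact absurd rfl hb0
            · exact h
          have hbn : n ≤ b := hBn b hbB
          have : b ≠ n := by
            rintro rfl
            exact hbD ⟨0, Set.mem_insert 0 B, show 0 + b = b by omega⟩
          omega
        · -- b = c + n, c ∈ C, b ∉ C
          have hcB : c ∈ B := by
            rcases hcC with rfl | h
            · exact absurd (show (0:ℕ) + n ∈ C from Or.inr (by simpa using hn)) hbC
            · exact h
          have := hBn c hcB
          show n + 1 ≤ c + n
          omega
      · have : insert 0 (((C \ D) ∪ (D \ C)) \ {0}) = (C \ D) ∪ (D \ C) := by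
          ext m
          simp only [Set.mem_insert_iff, Set.mem_diff, Set.mem_singleton_iff]
          constructor
          · rintro (rfl | ⟨h, _⟩) <;> [exact h0mem; exact h]
          · intro hm
            by_cases hm0 : m = 0
            · exact Or.inl hm0
            · exact Or.inr ⟨hm, hm0⟩
        rwa [this]
    · refine ⟨τ, hτH, B, ?_, hB0, hτ⟩
      intro b hb
      have := hBn b hb
      have : b ≠ n := fun h => hn (h ▸ hb)
      omega
end
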